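/- arXiv:1612.06078 — 3 statements merged into one kernel-verified Lean document; each statement's English description precedes it below -/
import Mathlib

section
/- Let $K$ be a compact topological space, $\alpha \in [0,1)$ and $\varepsilon > 0$. Suppose $(v_i)_{i \in \mathbb{N}}$ is a sequence of continuous functions $v_i : K \to \mathbb{R}$ with $0 \le v_i \le 1$ on $K$ and $\limsup_{i\to\infty} v_i(x) \le \alpha$ for every $x \in K$. Then there exist finitely many indices $i_1,\dots,i_N$ and nonnegative coefficients $\lambda_1,\dots,\lambda_N$ summing to $1$ such that the convex combination $\widehat v = \sum_{j=1}^N \lambda_j v_{i_j}$ satisfies $\widehat v(x) \le \alpha + \varepsilon$ for every $x \in K$. -/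
open Filter MeasureTheory BoundedContinuousFunction Set TopologicalSpace
open scoped NNReal ENNReal Topology

section RMK

variable {X : Type*} [TopologicalSpace X] [CompactSpace X] [T2Space X]
variable (Λ : (X →ᵇ ℝ≥0) →ₗ[ℝ≥0] ℝ≥0)

/-- Monotonicity of a positive (`ℝ≥0`-valued) linear functional. -/
theorem rmk_mono {f g : X →ᵇ ℝ≥0} (h : ∀ x, f x ≤ g x) : Λ f ≤ Λ g := by
  have hd : Continuous fun x => g x - f x :=
    (map_continuous g).sub (map_continuous f)
  set d : X →ᵇ ℝ≥0 := mkOfCompact ⟨fun x => g x - f x, hd⟩ with hdd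
  have hfd : f + d = g := by
    ext x
    simp only [coe_add, Pi.add_apply, hdd, mkOfCompact_apply, ContinuousMap.coe_mk]
    exact_mod_cast add_tsub_cancel_of_le (h x)
  calc Λ f ≤ Λ f + Λ d := le_self_add
    _ = Λ (f + d) := (map_add Λ f d).symm
    _ = Λ g := by rw [hfd]

/-- The content of a compact set w.r.t. a positive functional on bounded continuous functions. -/
noncomputable def rieszContentAuxB : Compacts X → ℝ≥0 := fun K =>
  sInf (Λ '' { f : X →ᵇ ℝ≥0 | ∀ x ∈ K, (1 : ℝ≥0) ≤ f x })

theorem rieszContentAuxB_image_nonempty (K : Compacts X) :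
    (Λ '' { f : X →ᵇ ℝ≥0 | ∀ x ∈ K, (1 : ℝ≥0) ≤ f x }).Nonempty :=
  ⟨Λ 1, 1, fun _ _ => le_rfl, rfl⟩

theorem rieszContentAuxB_le {K : Compacts X} {f : X →ᵇ ℝ≥0} (h : ∀ x ∈ K, (1 : ℝ≥0) ≤ f x) :
    rieszContentAuxB Λ K ≤ Λ f :=
  csInf_le (OrderBot.bddBelow _) ⟨f, h, rfl⟩

theorem rieszContentAuxB_mono {K₁ K₂ : Compacts X} (h : K₁ ≤ K₂) :
    rieszContentAuxB Λ K₁ ≤ rieszContentAuxB Λ K₂ :=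
  csInf_le_csInf (OrderBot.bddBelow _) (rieszContentAuxB_image_nonempty Λ K₂)
    (image_mono fun f hf x hx => hf x (h hx))

theorem rieszContentAuxB_sup_le (K1 K2 : Compacts X) :
    rieszContentAuxB Λ (K1 ⊔ K2) ≤ rieszContentAuxB Λ K1 + rieszContentAuxB Λ K2 := by
  apply _root_.le_of_forall_pos_le_add
  intro ε εpos
  obtain ⟨_, ⟨f1, hf1, rfl⟩, h1⟩ := exists_lt_of_csInf_lt (rieszContentAuxB_image_nonempty Λ K1)
    (lt_add_of_pos_right (rieszContentAuxB Λ K1) (half_pos εpos))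
  obtain ⟨_, ⟨f2, hf2, rfl⟩, h2⟩ := exists_lt_of_csInf_lt (rieszContentAuxB_image_nonempty Λ K2)
    (lt_add_of_pos_right (rieszContentAuxB Λ K2) (half_pos εpos))
  have hu : ∀ x ∈ K1 ⊔ K2, (1 : ℝ≥0) ≤ (f1 + f2) x := by
    rintro x (hx | hx)
    · show (1 : ℝ≥0) ≤ f1 x + f2 x
      exact le_add_right (hf1 x hx)
    · show (1 : ℝ≥0) ≤ f1 x + f2 x
      exact le_add_left (hf2 x hx)
  calc rieszContentAuxB Λ (K1 ⊔ K2) ≤ Λ (f1 + f2) := rieszContentAuxB_le Λ hu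
    _ = Λ f1 + Λ f2 := map_add _ _ _
    _ ≤ rieszContentAuxB Λ K1 + ε / 2 + (rieszContentAuxB Λ K2 + ε / 2) := add_le_add h1.le h2.le
    _ = rieszContentAuxB Λ K1 + rieszContentAuxB Λ K2 + ε := by rw [add_add_add_comm, add_halves]

theorem rmk_sup_disjoint (K₁ K₂ : Compacts X) (hd : Disjoint (K₁ : Set X) K₂) :
    rieszContentAuxB Λ (K₁ ⊔ K₂) = rieszContentAuxB Λ K₁ + rieszContentAuxB Λ K₂ := by
  refine le_antisymm (rieszContentAuxB_sup_le Λ K₁ K₂) ?_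
  obtain ⟨h, h0, h1, hicc⟩ :=
    exists_continuous_zero_one_of_isClosed K₁.isCompact.isClosed K₂.isCompact.isClosed hd
  refine le_csInf (rieszContentAuxB_image_nonempty Λ (K₁ ⊔ K₂)) ?_
  rintro b ⟨g, hg, rfl⟩
  have hc1 : Continuous fun x => g x * Real.toNNReal (1 - h x) :=
    (map_continuous g).mul (continuous_real_toNNReal.comp (continuous_const.sub (map_continuous h)))
  have hc2 : Continuous fun x => g x * Real.toNNReal (h x) :=
    (map_continuous g).mul (continuous_real_toNNReal.comp (map_continuous h))
  set g₁ : X →ᵇ ℝ≥0 := mkOfCompact ⟨fun x => g x * Real.toNNReal (1 - h x), hc1⟩ with hg₁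
  set g₂ : X →ᵇ ℝ≥0 := mkOfCompact ⟨fun x => g x * Real.toNNReal (h x), hc2⟩ with hg₂
  have hsum : g₁ + g₂ = g := by
    ext x
    simp only [hg₁, hg₂, coe_add, Pi.add_apply, mkOfCompact_apply, ContinuousMap.coe_mk]
    rw [← mul_add]
    have h01 : (0:ℝ) ≤ h x ∧ h x ≤ 1 := ⟨(hicc x).1, (hicc x).2⟩
    have : Real.toNNReal (1 - h x) + Real.toNNReal (h x) = 1 := by
      ext
      push_cast [Real.coe_toNNReal _ (by linarith [h01.1, h01.2] : (0:ℝ) ≤ 1 - h x),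
        Real.coe_toNNReal _ h01.1]
      ring
    rw [this, mul_one]
  have hK₁ : ∀ x ∈ K₁, (1 : ℝ≥0) ≤ g₁ x := by
    intro x hx
    have hgx : (1 : ℝ≥0) ≤ g x := hg x (Or.inl hx)
    have hhx : h x = 0 := h0 hx
    simp only [hg₁, mkOfCompact_apply, ContinuousMap.coe_mk, hhx, sub_zero, Real.toNNReal_one,
      mul_one]
    exact hgx
  have hK₂ : ∀ x ∈ K₂, (1 : ℝ≥0) ≤ g₂ x := by
    intro x hx
    have hgx : (1 : ℝ≥0) ≤ g x := hg x (Or.inr hx)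
    have hhx : h x = 1 := h1 hx
    simp only [hg₂, mkOfCompact_apply, ContinuousMap.coe_mk, hhx, Real.toNNReal_one, mul_one]
    exact hgx
  calc rieszContentAuxB Λ K₁ + rieszContentAuxB Λ K₂ ≤ Λ g₁ + Λ g₂ :=
        add_le_add (rieszContentAuxB_le Λ hK₁) (rieszContentAuxB_le Λ hK₂)
    _ = Λ (g₁ + g₂) := (map_add Λ g₁ g₂).symm
    _ = Λ g := by rw [hsum]

/-- The content associated to a positive linear functional on a compact Hausdorff space. -/
noncomputable def rmkContent : Content X where
  toFun := rieszContentAuxB Λ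
  mono' := fun K₁ K₂ h => rieszContentAuxB_mono Λ h
  sup_disjoint' := fun K₁ K₂ hd _ _ => rmk_sup_disjoint Λ K₁ K₂ hd
  sup_le' := fun K₁ K₂ => rieszContentAuxB_sup_le Λ K₁ K₂

variable [MeasurableSpace X] [BorelSpace X]

theorem rmk_measure_univ_le (h1 : Λ 1 ≤ 1) : (rmkContent Λ).measure univ ≤ 1 := by
  rw [(rmkContent Λ).measure_apply MeasurableSet.univ]
  have : (rmkContent Λ).outerMeasure univ = (rmkContent Λ).innerContent ⟨univ, isOpen_univ⟩ :=
    (rmkContent Λ).outerMeasure_opens ⟨univ, isOpen_univ⟩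
  rw [this]
  refine iSup₂_le fun K _ => ?_
  have h2 : rieszContentAuxB Λ K ≤ Λ 1 := rieszContentAuxB_le Λ (fun x _ => le_refl 1)
  show ((rieszContentAuxB Λ K : ℝ≥0) : ℝ≥0∞) ≤ 1
  exact_mod_cast h2.trans h1


theorem rmkContent_apply (K : Compacts X) :
    (rmkContent Λ) K = (rieszContentAuxB Λ K : ℝ≥0∞) := rfl


theorem rmk_le_lintegral (h1 : Λ 1 ≤ 1) (f : X →ᵇ ℝ≥0) (hf : ∀ x, f x ≤ 1) :
    (Λ f : ℝ≥0∞) ≤ ∫⁻ x, (f x : ℝ≥0∞) ∂(rmkContent Λ).measure := by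
  set μ := (rmkContent Λ).measure with hμ
  -- it suffices to prove the bound with an extra `1/(m+1)` slack
  refine ENNReal.le_of_forall_pos_le_add fun ε hε _ => ?_
  obtain ⟨m, hm⟩ := exists_nat_gt (ε⁻¹ : ℝ≥0)
  set n : ℕ := m + 1 with hn
  set δ : ℝ≥0 := (n : ℝ≥0)⁻¹ with hδ
  have hδε : δ ≤ ε := by
    have hεR : (0:ℝ) < (ε : ℝ) := hε
    have hnR : ((ε : ℝ))⁻¹ < (n : ℝ) := by
      have hmR : ((ε : ℝ))⁻¹ < (m : ℝ) := by exact_mod_cast hm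
      have : (m : ℝ) ≤ (n : ℝ) := by exact_mod_cast Nat.le_succ m
      linarith
    have h1n : (1:ℝ) < (n : ℝ) * ε := by
      calc (1:ℝ) = (ε:ℝ)⁻¹ * ε := (inv_mul_cancel₀ (ne_of_gt hεR)).symm
        _ < (n : ℝ) * ε := by gcongr
    have hnpos : (0:ℝ) < (n : ℝ) := by positivity
    have hcoe : (δ : ℝ) = ((n : ℝ))⁻¹ := by rw [hδ]; push_cast; rfl
    have : (δ : ℝ) ≤ (ε : ℝ) := by
      rw [hcoe]
      calc ((n:ℝ))⁻¹ = ((n:ℝ))⁻¹ * 1 := by ring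
        _ ≤ ((n:ℝ))⁻¹ * ((n:ℝ) * ε) := by
              have hpos : (0:ℝ) ≤ ((n:ℝ))⁻¹ := by positivity
              nlinarith [h1n]
        _ = ε := by field_simp
    exact_mod_cast this
  have hnδ : (n : ℝ≥0) * δ = 1 := by
    rw [hδ]
    exact mul_inv_cancel₀ (Nat.cast_ne_zero.mpr (Nat.succ_ne_zero m))
  -- the slices
  have hgc : ∀ j : ℕ, Continuous fun x => min (f x) ((j + 1 : ℕ) * δ) - min (f x) ((j : ℕ) * δ) :=
    fun j => ((map_continuous f).min continuous_const).sub
      ((map_continuous f).min continuous_const)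
  set g : ℕ → (X →ᵇ ℝ≥0) := fun j => mkOfCompact ⟨_, hgc j⟩ with hg
  have hgapp : ∀ j x, g j x = min (f x) ((j + 1 : ℕ) * δ) - min (f x) ((j : ℕ) * δ) :=
    fun j x => rfl
  -- the compact superlevel sets
  have hKc : ∀ j : ℕ, IsCompact {x : X | (j : ℝ≥0) * δ ≤ f x} :=
    fun j => (isClosed_le continuous_const (map_continuous f)).isCompact
  set Ks : ℕ → Compacts X := fun j => ⟨_, hKc j⟩ with hKs
  -- A : the slices sum to f
  have hsumx : ∀ x, ∑ j ∈ Finset.range n, g j x = f x := by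
    intro x
    have hmono : Monotone fun j : ℕ => min (f x) ((j : ℝ≥0) * δ) := by
      intro a b hab
      exact min_le_min le_rfl (mul_le_mul' (by exact_mod_cast hab) le_rfl)
    have h := Finset.sum_range_tsub hmono n
    calc ∑ j ∈ Finset.range n, g j x
        = min (f x) ((n : ℝ≥0) * δ) - min (f x) (((0:ℕ) : ℝ≥0) * δ) := by
          simp only [hgapp]
          exact h
      _ = f x := by
          rw [hnδ, min_eq_left (hf x)]
          simp
  have hsum : ∑ j ∈ Finset.range n, g j = f := by
    ext x
    have h2 : (∑ j ∈ Finset.range n, g j) x = ∑ j ∈ Finset.range n, g j x := by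
      rw [coe_sum, Finset.sum_apply]
    exact_mod_cast h2.trans (hsumx x)
  -- B : content bound for each slice
  have hB : ∀ j : ℕ, (n : ℝ≥0) * Λ (g j) ≤ rieszContentAuxB Λ (Ks j) := by
    intro j
    refine le_csInf (rieszContentAuxB_image_nonempty Λ (Ks j)) ?_
    rintro b ⟨h, hh, rfl⟩
    have hpt : ∀ x, ((n : ℝ≥0) • g j) x ≤ h x := by
      intro x
      simp only [coe_smul, Pi.smul_apply, smul_eq_mul]
      by_cases hx : (j : ℝ≥0) * δ ≤ f x
      · have h1x : (1 : ℝ≥0) ≤ h x := hh x hx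
        have hgj : g j x ≤ δ := by
          rw [hgapp]
          refine tsub_le_iff_right.2 ?_
          have : ((j + 1 : ℕ) : ℝ≥0) * δ = (j : ℝ≥0) * δ + δ := by
            push_cast; ring
          rw [this]
          rcases le_total (f x) ((j : ℝ≥0) * δ) with hc | hc
          · calc min (f x) ((j:ℝ≥0) * δ + δ) ≤ f x := min_le_left _ _
              _ ≤ δ + min (f x) ((j:ℝ≥0)*δ) := by rw [min_eq_left hc]; exact le_add_self
          · calc min (f x) ((j:ℝ≥0) * δ + δ) ≤ (j:ℝ≥0)*δ + δ := min_le_right _ _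
              _ = δ + min (f x) ((j:ℝ≥0)*δ) := by rw [min_eq_right hc]; ring
        calc (n : ℝ≥0) * g j x ≤ (n : ℝ≥0) * δ := by gcongr
          _ = 1 := hnδ
          _ ≤ h x := h1x
      · push_neg at hx
        have : g j x = 0 := by
          rw [hgapp]
          have hle : f x ≤ (j : ℝ≥0) * δ := hx.le
          have hle' : f x ≤ ((j+1 : ℕ) : ℝ≥0) * δ := by
            refine hle.trans ?_
            gcongr
            exact_mod_cast Nat.le_succ j
          rw [min_eq_left hle, min_eq_left hle', tsub_self]
        rw [this, mul_zero]
        exact zero_le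
    calc (n : ℝ≥0) * Λ (g j) = Λ ((n : ℝ≥0) • g j) := by
          rw [_root_.map_smul, smul_eq_mul]
      _ ≤ Λ h := rmk_mono Λ hpt
  -- C : integral lower bound for each slice
  have hC : ∀ j : ℕ, (δ : ℝ≥0∞) * μ (Ks (j+1)) ≤ ∫⁻ x, (g j x : ℝ≥0∞) ∂μ := by
    intro j
    have hmeas : MeasurableSet ((Ks (j+1)) : Set X) := (hKc (j+1)).isClosed.measurableSet
    calc (δ : ℝ≥0∞) * μ (Ks (j+1))
        = ∫⁻ x, ((Ks (j+1) : Set X)).indicator (fun _ => (δ : ℝ≥0∞)) x ∂μ := by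
          rw [lintegral_indicator_const hmeas]
      _ ≤ ∫⁻ x, (g j x : ℝ≥0∞) ∂μ := by
          refine lintegral_mono fun x => ?_
          by_cases hx : x ∈ (Ks (j+1) : Set X)
          · rw [indicator_of_mem hx]
            have hfx : ((j + 1 : ℕ) : ℝ≥0) * δ ≤ f x := hx
            have : g j x = δ := by
              rw [hgapp, min_eq_right hfx, min_eq_right
                (le_trans (by gcongr; exact_mod_cast Nat.le_succ j) hfx)]
              have : ((j + 1 : ℕ) : ℝ≥0) * δ = (j : ℝ≥0) * δ + δ := by push_cast; ring
              rw [this, add_tsub_cancel_left]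
            rw [this]
          · rw [indicator_of_notMem hx]
            exact zero_le
  -- assemble
  have hmeasg : ∀ j, Measurable fun x => (g j x : ℝ≥0∞) :=
    fun j => (map_continuous (g j)).measurable.coe_nnreal_ennreal
  have key : (Λ f : ℝ≥0∞) ≤ (δ : ℝ≥0∞) + ∫⁻ x, (f x : ℝ≥0∞) ∂μ := by
    have hΛf : Λ f = ∑ j ∈ Finset.range n, Λ (g j) := by
      rw [← hsum, map_sum]
    calc (Λ f : ℝ≥0∞) = ∑ j ∈ Finset.range n, (Λ (g j) : ℝ≥0∞) := by
          rw [hΛf, ENNReal.coe_finset_sum]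
      _ ≤ ∑ j ∈ Finset.range n, (δ : ℝ≥0∞) * (rieszContentAuxB Λ (Ks j) : ℝ≥0∞) := by
          refine Finset.sum_le_sum fun j _ => ?_
          have := hB j
          have h2 : Λ (g j) ≤ δ * rieszContentAuxB Λ (Ks j) := by
            calc Λ (g j) = δ * ((n : ℝ≥0) * Λ (g j)) := by
                  rw [← mul_assoc, mul_comm δ, hnδ, one_mul]
              _ ≤ δ * rieszContentAuxB Λ (Ks j) := by gcongr
          exact_mod_cast h2
      _ = (δ : ℝ≥0∞) * (rieszContentAuxB Λ (Ks 0) : ℝ≥0∞)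
          + ∑ j ∈ Finset.range m, (δ : ℝ≥0∞) * (rieszContentAuxB Λ (Ks (j+1)) : ℝ≥0∞) := by
          rw [hn, Finset.sum_range_succ']; ring
      _ ≤ (δ : ℝ≥0∞) + ∑ j ∈ Finset.range m, ∫⁻ x, (g j x : ℝ≥0∞) ∂μ := by
          refine add_le_add ?_ (Finset.sum_le_sum fun j _ => ?_)
          · have h2 : rieszContentAuxB Λ (Ks 0) ≤ Λ 1 :=
              rieszContentAuxB_le Λ (fun x _ => le_refl 1)
            calc (δ : ℝ≥0∞) * (rieszContentAuxB Λ (Ks 0) : ℝ≥0∞)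
                ≤ (δ : ℝ≥0∞) * 1 := by
                  gcongr
                  exact_mod_cast h2.trans h1
              _ = (δ : ℝ≥0∞) := mul_one _
          · refine le_trans ?_ (hC j)
            gcongr
            have hma : μ ((Ks (j+1)) : Set X) = (rmkContent Λ).outerMeasure (Ks (j+1)) :=
              (rmkContent Λ).measure_apply (Ks (j+1)).isCompact.isClosed.measurableSet
            rw [hma]
            refine le_trans (le_of_eq (rmkContent_apply Λ (Ks (j+1))).symm) ?_
            exact (rmkContent Λ).le_outerMeasure_compacts (Ks (j+1))
      _ ≤ (δ : ℝ≥0∞) + ∑ j ∈ Finset.range n, ∫⁻ x, (g j x : ℝ≥0∞) ∂μ := by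
          gcongr
          exact Nat.le_succ m
      _ = (δ : ℝ≥0∞) + ∫⁻ x, (f x : ℝ≥0∞) ∂μ := by
          congr 1
          rw [← lintegral_finset_sum _ (fun j _ => hmeasg j)]
          refine lintegral_congr fun x => ?_
          rw [← hsumx x, ENNReal.coe_finset_sum]
  refine key.trans ?_
  rw [add_comm]
  gcongr


end RMK

/-- If `(v i)` is a sequence of continuous functions on a compact space `K` with
`0 ≤ v i ≤ 1` and `limsup_i v i x ≤ α` for each `x ∈ K`, where `α ∈ [0,1)`, then for every
`ε > 0` some convex combination of the `v i` is bounded above by `α + ε` on all of `K`. -/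
theorem stmt0 {K : Type*} [TopologicalSpace K] [CompactSpace K] [T2Space K]
    (α ε : ℝ) (hα : α ∈ Set.Ico (0 : ℝ) 1) (hε : 0 < ε)
    (v : ℕ → C(K, ℝ))
    (hv0 : ∀ i x, 0 ≤ v i x) (hv1 : ∀ i x, v i x ≤ 1)
    (hlim : ∀ x, Filter.limsup (fun i => v i x) Filter.atTop ≤ α) :
    ∃ (N : ℕ) (idx : Fin N → ℕ) (lam : Fin N → ℝ),
      (∀ j, 0 ≤ lam j) ∧ (∑ j, lam j = 1) ∧
      ∀ x, ∑ j, lam j * v (idx j) x ≤ α + ε := by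
  classical
  obtain ⟨hα0, hα1⟩ := hα
  rcases isEmpty_or_nonempty K with hK | hK
  · exact ⟨1, fun _ => 0, fun _ => 1, fun _ => zero_le_one, by simp, fun x => hK.elim x⟩
  -- the vector-valued maps and target sets
  set vec : ∀ N : ℕ, K → (Fin (N+1) → ℝ) := fun N x j => v (j : ℕ) x with hvec
  set Q : ∀ N : ℕ, Set (Fin (N+1) → ℝ) := fun N => {c | ∀ j, α + ε ≤ c j} with hQ
  by_cases hdis : ∃ N, Disjoint (closure (convexHull ℝ (Set.range (vec N)))) (Q N)
  · -- separation gives the desired convex combination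
    obtain ⟨N, hd⟩ := hdis
    have hAb : Bornology.IsBounded (Set.range (vec N)) := by
      refine (Metric.isBounded_closedBall (x := (0 : Fin (N+1) → ℝ)) (r := 1)).subset ?_
      rintro a ⟨x, rfl⟩
      rw [Metric.mem_closedBall, dist_zero_right]
      refine (pi_norm_le_iff_of_nonneg zero_le_one).mpr fun j => ?_
      rw [Real.norm_eq_abs, abs_le]
      exact ⟨by linarith [hv0 (j : ℕ) x], hv1 (j : ℕ) x⟩
    have hCcomp : IsCompact (closure (convexHull ℝ (Set.range (vec N)))) :=
      (isBounded_convexHull.mpr hAb).isCompact_closure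
    have hCconv : Convex ℝ (closure (convexHull ℝ (Set.range (vec N)))) :=
      (convex_convexHull ℝ _).closure
    have hQconv : Convex ℝ (Q N) := by
      intro c hc d hd' a b ha hb hab j
      have h1 := hc j
      have h2 := hd' j
      simp only [Pi.add_apply, Pi.smul_apply, smul_eq_mul]
      nlinarith
    have hQclosed : IsClosed (Q N) := by
      have : Q N = ⋂ j, (fun c : Fin (N+1) → ℝ => c j) ⁻¹' Set.Ici (α + ε) := by
        ext c; simp [hQ, Set.mem_iInter]
      rw [this]
      exact isClosed_iInter fun j => isClosed_Ici.preimage (continuous_apply j)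
    obtain ⟨φ, u, w, hsu, huw, htw⟩ :=
      geometric_hahn_banach_compact_closed hCconv hCcomp hQconv hQclosed hd
    set y : Fin (N+1) → ℝ := fun i => φ (fun j => if i = j then 1 else 0) with hy
    have hrepr : ∀ c : Fin (N+1) → ℝ, φ c = ∑ i, c i * y i := by
      intro c
      conv_lhs => rw [pi_eq_sum_univ c]
      rw [map_sum]
      refine Finset.sum_congr rfl fun i _ => ?_
      rw [_root_.map_smul, smul_eq_mul]
    set P : ℝ := φ (fun _ => α + ε) with hP
    have hconstQ : (fun _ : Fin (N+1) => α + ε) ∈ Q N := fun j => le_refl _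
    have hwP : w < P := by rw [hP]; exact htw _ hconstQ
    have hy0 : ∀ i, 0 ≤ y i := by
      intro i
      by_contra hneg
      push_neg at hneg
      have hyipos : 0 < -y i := by linarith
      set s : ℝ := (P - w) / (-y i) + 1 with hs
      have hs0 : 0 ≤ s := by
        have h' : 0 ≤ (P - w) / (-y i) := div_nonneg (by linarith) hyipos.le
        rw [hs]; linarith
      have hmem : ((fun _ : Fin (N+1) => α + ε)
          + s • (fun j => if i = j then (1:ℝ) else 0)) ∈ Q N := by
        simp only [hQ, Set.mem_setOf_eq]
        intro j'
        simp only [Pi.add_apply, Pi.smul_apply, smul_eq_mul]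
        by_cases hij : i = j'
        · rw [if_pos hij]; nlinarith
        · rw [if_neg hij]; simp
      have hφeq : φ ((fun _ : Fin (N+1) => α + ε)
          + s • (fun j => if i = j then (1:ℝ) else 0)) = P + s * y i := by
        rw [map_add, _root_.map_smul, smul_eq_mul]
      have hcontr := htw _ hmem
      rw [hφeq] at hcontr
      have hsy : s * y i = -(P - w) + y i := by
        have hne : -y i ≠ 0 := ne_of_gt hyipos
        rw [hs]
        have hyne : y i ≠ 0 := by linarith
        rw [add_mul, one_mul, div_mul_eq_mul_div, mul_div_assoc, div_neg, div_self hyne,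
          mul_neg, mul_one]
      rw [hsy] at hcontr
      linarith
    have hPS : P = (α + ε) * ∑ i, y i := by
      rw [hP, hrepr, Finset.mul_sum]
    obtain ⟨x₀⟩ := hK
    have hmemA : ∀ x : K, vec N x ∈ closure (convexHull ℝ (Set.range (vec N))) :=
      fun x => subset_closure (subset_convexHull ℝ _ (Set.mem_range_self x))
    have hφx0 : 0 ≤ φ (vec N x₀) := by
      rw [hrepr]
      exact Finset.sum_nonneg fun i _ => mul_nonneg (hv0 _ _) (hy0 i)
    have hx0u : φ (vec N x₀) < u := hsu _ (hmemA x₀)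
    have hαε : 0 < α + ε := by linarith
    have hSpos : 0 < ∑ i, y i := by
      have h1 : 0 < (α + ε) * ∑ i, y i := by
        rw [← hPS]; linarith
      by_contra hcon
      push_neg at hcon
      nlinarith
    refine ⟨N + 1, fun j => (j : ℕ), fun j => y j / (∑ i, y i), ?_, ?_, ?_⟩
    · exact fun j => div_nonneg (hy0 j) hSpos.le
    · rw [← Finset.sum_div, div_self (ne_of_gt hSpos)]
    · intro x
      have hxu : φ (vec N x) < u := hsu _ (hmemA x)
      have heq : ∑ j, y j / (∑ i, y i) * v (j : ℕ) x = φ (vec N x) / (∑ i, y i) := by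
        rw [hrepr, Finset.sum_div]
        refine Finset.sum_congr rfl fun j _ => ?_
        have : vec N x j = v (j : ℕ) x := rfl
        rw [this]
        ring
      rw [heq, div_le_iff₀ hSpos]
      have : w < (α + ε) * ∑ i, y i := by rw [← hPS]; exact hwP
      linarith
  · -- the impossible branch: build a measure and contradict Fatou
    exfalso
    push_neg at hdis
    have hdata : ∀ N : ℕ, ∃ (ι : Type) (t : Finset ι) (w : ι → ℝ) (p : ι → K),
        (∀ i ∈ t, 0 ≤ w i) ∧ (∑ i ∈ t, w i = 1) ∧
        (∀ j : Fin (N+1), α + ε/2 ≤ ∑ i ∈ t, w i * v (j : ℕ) (p i)) := by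
      intro N
      obtain ⟨c, hcl, hcQ⟩ := Set.not_disjoint_iff.mp (hdis N)
      obtain ⟨c', hc', hdist⟩ := Metric.mem_closure_iff.mp hcl (ε/2) (by linarith)
      have hc'Q : ∀ j, α + ε/2 ≤ c' j := by
        intro j
        have h1 : dist (c j) (c' j) ≤ dist c c' := dist_le_pi_dist c c' j
        have h2 : |c j - c' j| ≤ dist c c' := by rw [← Real.dist_eq]; exact h1
        have h3 := abs_le.mp h2
        have h4 := hcQ j
        linarith
      rw [convexHull_eq] at hc'
      obtain ⟨ι, t, w, z, hw0, hw1, hz, hcm⟩ := hc'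
      set p : ι → K := fun i => if h : ∃ x : K, vec N x = z i then h.choose else hK.some with hp
      refine ⟨ι, t, w, p, hw0, hw1, fun j => ?_⟩
      have hc'j : c' j = ∑ i ∈ t, w i * z i j := by
        rw [← hcm, Finset.centerMass_eq_of_sum_1 _ _ hw1, Finset.sum_apply]
        refine Finset.sum_congr rfl fun i _ => ?_
        simp [smul_eq_mul]
      have hsum : ∑ i ∈ t, w i * v (j : ℕ) (p i) = c' j := by
        rw [hc'j]
        refine Finset.sum_congr rfl fun i hi => ?_
        have hex : ∃ x : K, vec N x = z i := hz i hi
        have hpz : vec N (p i) = z i := by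
          rw [hp]; simp only [dif_pos hex]; exact hex.choose_spec
        have : v (j : ℕ) (p i) = z i j := by rw [← hpz]
        rw [this]
      rw [hsum]
      exact hc'Q j
    choose ι t w p h0 h1 h2 using hdata
    -- the ultrafilter limit functional
    set U : Ultrafilter ℕ := Ultrafilter.of atTop with hUdef
    have hU : (U : Filter ℕ) ≤ atTop := Ultrafilter.of_le _
    set φs : ∀ N : ℕ, (K →ᵇ ℝ≥0) → ℝ≥0 :=
      fun N f => ∑ i ∈ t N, (w N i).toNNReal * f (p N i) with hφs
    have hφcoe : ∀ N f, ((φs N f : ℝ≥0) : ℝ) = ∑ i ∈ t N, w N i * (f (p N i) : ℝ) := by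
      intro N f
      rw [hφs]
      push_cast
      refine Finset.sum_congr rfl fun i hi => ?_
      rw [Real.coe_toNNReal _ (h0 N i hi)]
    have hw1' : ∀ N, ∑ i ∈ t N, (w N i).toNNReal = 1 := by
      intro N
      apply NNReal.coe_injective
      push_cast
      rw [Finset.sum_congr rfl fun i hi => Real.coe_toNNReal _ (h0 N i hi)]
      exact h1 N
    have hbd : ∀ (f : K →ᵇ ℝ≥0) (M : ℝ≥0), (∀ x, f x ≤ M) → ∀ N, φs N f ≤ M := by
      intro f M hM N
      rw [hφs]
      calc ∑ i ∈ t N, (w N i).toNNReal * f (p N i)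
          ≤ ∑ i ∈ t N, (w N i).toNNReal * M :=
            Finset.sum_le_sum fun i _ => mul_le_mul' le_rfl (hM _)
        _ = (∑ i ∈ t N, (w N i).toNNReal) * M := by rw [Finset.sum_mul]
        _ = M := by rw [hw1' N, one_mul]
    have hmax : ∀ f : K →ᵇ ℝ≥0, ∃ M : ℝ≥0, ∀ x, f x ≤ M := by
      intro f
      obtain ⟨xs, -, hxs⟩ := isCompact_univ.exists_isMaxOn
        Set.univ_nonempty (map_continuous f).continuousOn
      exact ⟨f xs, fun x => hxs (Set.mem_univ x)⟩
    have hconv : ∀ f : K →ᵇ ℝ≥0, ∃ a : ℝ≥0, Tendsto (fun N => φs N f) ↑U (𝓝 a) := by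
      intro f
      obtain ⟨M, hM⟩ := hmax f
      have hmem : (↑(U.map fun N => φs N f) : Filter ℝ≥0) ≤ 𝓟 (Set.Icc 0 M) := by
        rw [Ultrafilter.coe_map]
        refine le_principal_iff.mpr (mem_map.mpr (univ_mem' fun N => ?_))
        exact ⟨by positivity, hbd f M hM N⟩
      obtain ⟨a, -, ha⟩ := (isCompact_Icc (a := (0 : ℝ≥0)) (b := M)).ultrafilter_le_nhds
        (U.map fun N => φs N f) hmem
      refine ⟨a, ?_⟩
      rwa [Ultrafilter.coe_map] at ha
    set L : (K →ᵇ ℝ≥0) → ℝ≥0 := fun f => (hconv f).choose with hLdef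
    have hL : ∀ f, Tendsto (fun N => φs N f) ↑U (𝓝 (L f)) := fun f => (hconv f).choose_spec
    have hLadd : ∀ f g, L (f + g) = L f + L g := by
      intro f g
      refine tendsto_nhds_unique (hL (f + g)) ?_
      have hfg : (fun N => φs N (f + g)) = fun N => φs N f + φs N g := by
        funext N
        rw [hφs]
        simp only [BoundedContinuousFunction.coe_add, Pi.add_apply, mul_add]
        rw [Finset.sum_add_distrib]
      rw [hfg]
      exact (hL f).add (hL g)
    have hLsmul : ∀ (c : ℝ≥0) f, L (c • f) = c * L f := by
      intro c f
      refine tendsto_nhds_unique (hL (c • f)) ?_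
      have hcf : (fun N => φs N (c • f)) = fun N => c * φs N f := by
        funext N
        rw [hφs]
        simp only [BoundedContinuousFunction.coe_smul, Pi.smul_apply, smul_eq_mul]
        rw [Finset.mul_sum]
        exact Finset.sum_congr rfl fun i _ => by ring
      rw [hcf]
      exact (hL f).const_mul c
    set Λ : (K →ᵇ ℝ≥0) →ₗ[ℝ≥0] ℝ≥0 :=
      { toFun := L
        map_add' := hLadd
        map_smul' := fun c f => by simp [hLsmul c f] } with hΛdef
    have hΛapp : ∀ f, Λ f = L f := fun f => rfl
    have hΛ1 : Λ 1 = 1 := by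
      rw [hΛapp]
      refine tendsto_nhds_unique (hL 1) ?_
      have : (fun N => φs N 1) = fun _ => 1 := by
        funext N
        rw [hφs]
        simp only [BoundedContinuousFunction.coe_one, Pi.one_apply, mul_one]
        exact hw1' N
      rw [this]
      exact tendsto_const_nhds
    -- the test functions
    have hVc : ∀ i : ℕ, Continuous fun x : K => (v i x).toNNReal :=
      fun i => continuous_real_toNNReal.comp (v i).continuous
    set V : ℕ → (K →ᵇ ℝ≥0) := fun i => mkOfCompact ⟨_, hVc i⟩ with hV
    have hVapp : ∀ i x, V i x = (v i x).toNNReal := fun i x => rfl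
    have hV1 : ∀ i x, V i x ≤ 1 := by
      intro i x
      rw [hVapp]
      rw [show (1 : ℝ≥0) = Real.toNNReal 1 by simp]
      exact Real.toNNReal_mono (hv1 i x)
    have hΛV : ∀ i : ℕ, (α + ε/2).toNNReal ≤ Λ (V i) := by
      intro i
      rw [hΛapp]
      refine ge_of_tendsto (hL (V i)) ?_
      have hev : ∀ᶠ N in (U : Filter ℕ), i ≤ N := hU (eventually_ge_atTop i)
      refine hev.mono fun N hN => ?_
      rw [← NNReal.coe_le_coe, Real.coe_toNNReal _ (by linarith : (0:ℝ) ≤ α + ε/2), hφcoe]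
      have hj := h2 N ⟨i, by omega⟩
      refine le_trans hj (le_of_eq (Finset.sum_congr rfl fun i' hi' => ?_))
      congr 1
      rw [hVapp, Real.coe_toNNReal _ (hv0 i _)]
    -- the measure
    letI : MeasurableSpace K := borel K
    haveI : BorelSpace K := ⟨rfl⟩
    set μ : Measure K := (rmkContent Λ).measure with hμdef
    have hμ1 : μ Set.univ ≤ 1 := rmk_measure_univ_le Λ (le_of_eq hΛ1)
    have hint : ∀ i : ℕ, ENNReal.ofReal (α + ε/2) ≤ ∫⁻ x, ((V i x : ℝ≥0) : ℝ≥0∞) ∂μ := by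
      intro i
      refine le_trans ?_ (rmk_le_lintegral Λ (le_of_eq hΛ1) (V i) (hV1 i))
      rw [ENNReal.ofReal]
      exact_mod_cast hΛV i
    have hmeasV : ∀ i : ℕ, Measurable fun x => ((V i x : ℝ≥0) : ℝ≥0∞) :=
      fun i => (map_continuous (V i)).measurable.coe_nnreal_ennreal
    have hbound : ∀ i : ℕ, (fun x => ((V i x : ℝ≥0) : ℝ≥0∞)) ≤ᵐ[μ] fun _ => (1 : ℝ≥0∞) := by
      intro i
      refine Filter.Eventually.of_forall fun x => ?_
      show ((V i x : ℝ≥0) : ℝ≥0∞) ≤ 1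
      exact_mod_cast hV1 i x
    have hfin : ∫⁻ _x, (1 : ℝ≥0∞) ∂μ ≠ ⊤ := by
      rw [lintegral_one]
      exact (lt_of_le_of_lt hμ1 ENNReal.one_lt_top).ne
    have hFatou := limsup_lintegral_le (μ := μ) (f := fun i x => ((V i x : ℝ≥0) : ℝ≥0∞))
      (fun _ => (1 : ℝ≥0∞)) hmeasV hbound hfin
    have hptwise : ∀ x, limsup (fun i => ((V i x : ℝ≥0) : ℝ≥0∞)) atTop ≤ ENNReal.ofReal α := by
      intro x
      refine ENNReal.le_of_forall_pos_le_add fun δ hδ _ => ?_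
      have hbdd : IsBoundedUnder (· ≤ ·) atTop fun i => v i x :=
        isBoundedUnder_of ⟨1, fun i => hv1 i x⟩
      have hevent : ∀ᶠ i in atTop, v i x < α + δ := by
        refine eventually_lt_of_limsup_lt (lt_of_le_of_lt (hlim x) ?_) hbdd
        have : (0:ℝ) < δ := hδ
        linarith
      have hev2 : ∀ᶠ i in atTop,
          ((V i x : ℝ≥0) : ℝ≥0∞) ≤ ENNReal.ofReal α + (δ : ℝ≥0∞) := by
        refine hevent.mono fun i hi => ?_
        have hVeq : ((V i x : ℝ≥0) : ℝ≥0∞) = ENNReal.ofReal (v i x) := by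
          rw [hVapp]; rfl
        rw [hVeq]
        calc ENNReal.ofReal (v i x) ≤ ENNReal.ofReal (α + δ) := ENNReal.ofReal_le_ofReal hi.le
          _ = ENNReal.ofReal α + ENNReal.ofReal (δ : ℝ) := ENNReal.ofReal_add hα0 δ.coe_nonneg
          _ = ENNReal.ofReal α + (δ : ℝ≥0∞) := by rw [ENNReal.ofReal_coe_nnreal]
      exact limsup_le_of_le (by isBoundedDefault) hev2
    have hup : ∫⁻ x, limsup (fun i => ((V i x : ℝ≥0) : ℝ≥0∞)) atTop ∂μ ≤ ENNReal.ofReal α := by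
      calc ∫⁻ x, limsup (fun i => ((V i x : ℝ≥0) : ℝ≥0∞)) atTop ∂μ
          ≤ ∫⁻ _x, ENNReal.ofReal α ∂μ := lintegral_mono fun x => hptwise x
        _ = ENNReal.ofReal α * μ Set.univ := lintegral_const _
        _ ≤ ENNReal.ofReal α * 1 := by gcongr
        _ = ENNReal.ofReal α := mul_one _
    have hlow : ENNReal.ofReal (α + ε/2) ≤
        limsup (fun i => ∫⁻ x, ((V i x : ℝ≥0) : ℝ≥0∞) ∂μ) atTop := by
      have hcst : ENNReal.ofReal (α + ε/2) =
          limsup (fun _ : ℕ => ENNReal.ofReal (α + ε/2)) atTop := (limsup_const _).symm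
      rw [hcst]
      exact limsup_le_limsup (Filter.Eventually.of_forall fun i => hint i)
    have hfinal : ENNReal.ofReal (α + ε/2) ≤ ENNReal.ofReal α :=
      hlow.trans (hFatou.trans hup)
    rw [ENNReal.ofReal_le_ofReal_iff hα0] at hfinal
    linarith
end

section
/- Let $\nu$ be a function defined on the open subsets of a metric space $X$ with values in $[0,\infty]$ such that: $\nu(\emptyset)=0$; $\nu$ is monotone ($\nu(U_1)\le\nu(U_2)$ whenever $U_1 \subset U_2$ are open); $\nu(U_1\cup U_2)\le \nu(U_1)+\nu(U_2)$ for all open $U_1, U_2$; $\nu(U_1\cup U_2)\ge \nu(U_1)+\nu(U_2)$ whenever $U_1,U_2$ are disjoint open sets; and $\nu(U)=\sup\{\nu(V): V \text{ open}, \overline{V} \text{ compact}, \overline{V}\subset U\}$ for every open $U$. Then the extension of $\nu$ to all subsets of $X$ defined by $\nu(A):=\inf\{\nu(U): U \text{ open}, A \subset U\}$ is a Borel outer measure (i.e., a countably subadditive outer measure for which all Borel sets are Carathéodory measurable). -/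
open MeasureTheory Set
open scoped ENNReal

/-- De Giorgi–Letta: a set function `ν` on the open subsets of a metric space `X` that
vanishes on `∅`, is monotone, subadditive, superadditive on disjoint open sets, and inner
regular by open sets with compact closure, extends (by infimum over open supersets) to a
Borel outer measure: the extension vanishes on `∅`, is monotone, countably subadditive, and
every Borel set is Carathéodory measurable for it. -/
theorem stmt5 {X : Type*} [MetricSpace X] [MeasurableSpace X] [BorelSpace X]
    (ν : Set X → ℝ≥0∞) (h0 : ν ∅ = 0)
    (hmono : ∀ U V : Set X, IsOpen U → IsOpen V → U ⊆ V → ν U ≤ ν V)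
    (hsub : ∀ U V : Set X, IsOpen U → IsOpen V → ν (U ∪ V) ≤ ν U + ν V)
    (hadd : ∀ U V : Set X, IsOpen U → IsOpen V → Disjoint U V → ν U + ν V ≤ ν (U ∪ V))
    (hinner : ∀ U : Set X, IsOpen U →
      ν U = ⨆ (V : Set X) (_ : IsOpen V) (_ : IsCompact (closure V)) (_ : closure V ⊆ U), ν V) :
    let ext : Set X → ℝ≥0∞ := fun A => ⨅ (U : Set X) (_ : IsOpen U) (_ : A ⊆ U), ν U
    ext ∅ = 0 ∧
    (∀ A B : Set X, A ⊆ B → ext A ≤ ext B) ∧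
    (∀ s : ℕ → Set X, ext (⋃ i, s i) ≤ ∑' i, ext (s i)) ∧
    (∀ s : Set X, MeasurableSet s → ∀ t : Set X, ext t = ext (t ∩ s) + ext (t \ s)) := by
  intro ext
  have hext_le : ∀ (A U : Set X), IsOpen U → A ⊆ U → ext A ≤ ν U := fun A U hU hAU =>
    iInf_le_of_le U (iInf_le_of_le hU (iInf_le _ hAU))
  have hempty : ext ∅ = 0 := le_antisymm
    (by simpa [h0] using hext_le ∅ ∅ isOpen_empty subset_rfl) (zero_le)
  have hextmono : ∀ A B : Set X, A ⊆ B → ext A ≤ ext B := by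
    intro A B hAB
    exact le_iInf fun U => le_iInf fun hU => le_iInf fun hBU =>
      hext_le A U hU (hAB.trans hBU)
  -- finite subadditivity on open sets
  have hfin : ∀ (t : Finset ℕ) (U : ℕ → Set X), (∀ i, IsOpen (U i)) →
      ν (⋃ i ∈ t, U i) ≤ ∑ i ∈ t, ν (U i) := by
    intro t U hU
    induction t using Finset.induction with
    | empty => simp [h0]
    | @insert a s hx ih =>
      rw [Finset.set_biUnion_insert, Finset.sum_insert hx]
      exact (hsub _ _ (hU a) (isOpen_biUnion fun i _ => hU i)).trans
        (add_le_add le_rfl ih)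
  -- countable subadditivity on open sets
  have hcount : ∀ U : ℕ → Set X, (∀ i, IsOpen (U i)) →
      ν (⋃ i, U i) ≤ ∑' i, ν (U i) := by
    intro U hU
    rw [hinner _ (isOpen_iUnion hU)]
    refine iSup_le fun V => iSup_le fun hV => iSup_le fun hVc => iSup_le fun hVsub => ?_
    obtain ⟨t, ht⟩ := hVc.elim_finite_subcover U hU hVsub
    calc ν V ≤ ν (⋃ i ∈ t, U i) :=
          hmono _ _ hV (isOpen_biUnion fun i _ => hU i) (subset_closure.trans ht)
      _ ≤ ∑ i ∈ t, ν (U i) := hfin t U hU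
      _ ≤ ∑' i, ν (U i) := ENNReal.sum_le_tsum t
  -- countable subadditivity of ext
  have hextsub : ∀ s : ℕ → Set X, ext (⋃ i, s i) ≤ ∑' i, ext (s i) := by
    intro s
    rcases eq_top_or_lt_top (∑' i, ext (s i)) with htop | hlt
    · simp [htop]
    refine ENNReal.le_of_forall_pos_le_add fun ε hε _ => ?_
    obtain ⟨δ, hδ0, hδsum⟩ :=
      ENNReal.exists_pos_sum_of_countable (ENNReal.coe_ne_zero.2 hε.ne') ℕ
    have hchoice : ∀ i, ∃ U : Set X, IsOpen U ∧ s i ⊆ U ∧ ν U ≤ ext (s i) + δ i := by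
      intro i
      have hi : ext (s i) < ext (s i) + δ i :=
        ENNReal.lt_add_right ((ENNReal.le_tsum i).trans_lt hlt).ne
          (by exact_mod_cast (hδ0 i).ne')
      by_contra hcon
      push_neg at hcon
      have : ext (s i) + (δ i : ℝ≥0∞) ≤ ext (s i) :=
        le_iInf fun U => le_iInf fun hU => le_iInf fun hsU => (hcon U hU hsU).le
      exact absurd this (not_le.2 hi)
    choose U hUopen hUsub hUν using hchoice
    calc ext (⋃ i, s i) ≤ ν (⋃ i, U i) :=
          hext_le _ _ (isOpen_iUnion hUopen) (iUnion_mono hUsub)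
      _ ≤ ∑' i, ν (U i) := hcount U hUopen
      _ ≤ ∑' i, (ext (s i) + δ i) := ENNReal.tsum_le_tsum hUν
      _ = ∑' i, ext (s i) + ∑' i, (δ i : ℝ≥0∞) := ENNReal.tsum_add
      _ ≤ ∑' i, ext (s i) + ε := add_le_add le_rfl hδsum.le
  -- build the outer measure
  set μ : OuterMeasure X :=
    { measureOf := ext
      empty := hempty
      mono := fun h => hextmono _ _ h
      iUnion_nat := fun s _ => hextsub s } with hμ
  have hμapp : ∀ A : Set X, μ A = ext A := fun A => rfl
  -- metric outer measure
  have hmetric : μ.IsMetric := by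
    intro s t hst
    refine le_antisymm (measure_union_le s t) ?_
    obtain ⟨r, hr0, hr⟩ := hst
    set V := {x : X | EMetric.infEdist x s < r / 2} with hV
    set W := {x : X | EMetric.infEdist x t < r / 2} with hW
    have hVopen : IsOpen V := isOpen_lt EMetric.continuous_infEdist continuous_const
    have hWopen : IsOpen W := isOpen_lt EMetric.continuous_infEdist continuous_const
    have hr2 : (0 : ℝ≥0∞) < r / 2 := ENNReal.half_pos hr0
    have hsV : s ⊆ V := fun x hx => by
      show Metric.infEDist x s < r / 2
      rw [EMetric.infEdist_zero_of_mem hx]; exact hr2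
    have htW : t ⊆ W := fun x hx => by
      show Metric.infEDist x t < r / 2
      rw [EMetric.infEdist_zero_of_mem hx]; exact hr2
    have hdisj : Disjoint V W := by
      rw [Set.disjoint_left]
      intro x hxV hxW
      obtain ⟨y, hy, hxy⟩ := EMetric.infEdist_lt_iff.1 hxV
      obtain ⟨z, hz, hxz⟩ := EMetric.infEdist_lt_iff.1 hxW
      have hlt : edist y z < r := by
        calc edist y z ≤ edist y x + edist x z := edist_triangle y x z
          _ < r / 2 + r / 2 := ENNReal.add_lt_add (by rwa [edist_comm]) hxz
          _ = r := ENNReal.add_halves r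
      exact absurd (hr y hy z hz) (not_le.2 hlt)
    show ext s + ext t ≤ ext (s ∪ t)
    refine le_iInf fun Uo => le_iInf fun hUo => le_iInf fun hsub' => ?_
    calc ext s + ext t ≤ ν (Uo ∩ V) + ν (Uo ∩ W) :=
          add_le_add
            (hext_le s _ (hUo.inter hVopen)
              (subset_inter ((subset_union_left).trans hsub') hsV))
            (hext_le t _ (hUo.inter hWopen)
              (subset_inter ((subset_union_right).trans hsub') htW))
      _ ≤ ν ((Uo ∩ V) ∪ (Uo ∩ W)) :=
          hadd _ _ (hUo.inter hVopen) (hUo.inter hWopen)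
            (hdisj.mono inter_subset_right inter_subset_right)
      _ ≤ ν Uo := hmono _ _ ((hUo.inter hVopen).union (hUo.inter hWopen)) hUo
            (union_subset inter_subset_left inter_subset_left)
  have hb : borel X ≤ μ.caratheodory := hmetric.borel_le_caratheodory
  refine ⟨hempty, hextmono, hextsub, fun s hs t => ?_⟩
  have hs' : MeasurableSet[borel X] s := by rwa [← BorelSpace.measurable_eq (α := X)]
  exact (OuterMeasure.isCaratheodory_iff μ).1 (hb s hs') t
end

section
/- Let $(X, d, \mu)$ be a metric measure space and $\Omega$ a $\mu$-measurable set. For $u \in L^1_{loc}$, suppose the approximate lower and upper limits $u^\wedge(x)$ and $u^\vee(x)$ at a point $x$ both exist and are finite, and suppose both the interior trace $T_+u(x)$ with respect to $\Omega$ and the exterior trace $T_-u(x)$ with respect to $X\setminus\Omega$ exist at $x$, where $x$ is a point at which both $\Omega$ and its complement have positive lower density. Then $\{u^\wedge(x), u^\vee(x)\} = \{T_-u(x), T_+u(x)\}$ as sets. -/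
open Filter MeasureTheory Metric Set
open scoped ENNReal

/-- The set of levels `t` such that `{u < t}` has density 0 at `x`; the lower approximate
limit `u^∧(x)` is its supremum. -/
def lowerLevelSet {X : Type*} [PseudoMetricSpace X] [MeasurableSpace X]
    (μ : Measure X) (u : X → ℝ) (x : X) : Set ℝ :=
  {t : ℝ | Filter.Tendsto
    (fun r : ℝ => μ (Metric.ball x r ∩ {y | u y < t}) / μ (Metric.ball x r))
    (nhdsWithin 0 (Set.Ioi 0)) (nhds 0)}

/-- The set of levels `t` such that `{u > t}` has density 0 at `x`; the upper approximate
limit `u^∨(x)` is its infimum. -/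
def upperLevelSet {X : Type*} [PseudoMetricSpace X] [MeasurableSpace X]
    (μ : Measure X) (u : X → ℝ) (x : X) : Set ℝ :=
  {t : ℝ | Filter.Tendsto
    (fun r : ℝ => μ (Metric.ball x r ∩ {y | t < u y}) / μ (Metric.ball x r))
    (nhdsWithin 0 (Set.Ioi 0)) (nhds 0)}

/-- Markov/Chebyshev: if the averaged integral of `|u - T|` over `S r` tends to `0`, then the
relative measure in `S r` of any set where `|u - T| ≥ c > 0` tends to `0`. -/
lemma keyP {X : Type*} [MeasurableSpace X] (μ : Measure X) {u : X → ℝ} (hu : Measurable u)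
    (l : Filter ℝ) (S : ℝ → Set X) (T c : ℝ) (hc : 0 < c) (P : Set X)
    (hP : ∀ y ∈ P, c ≤ |u y - T|)
    (hT : Tendsto (fun r => (∫⁻ y in S r, ENNReal.ofReal |u y - T| ∂μ) / μ (S r)) l (nhds 0)) :
    Tendsto (fun r => μ (S r ∩ P) / μ (S r)) l (nhds 0) := by
  set ε : ℝ≥0∞ := ENNReal.ofReal c with hε
  have hε0 : ε ≠ 0 := (ENNReal.ofReal_pos.2 hc).ne'
  have hεtop : ε ≠ ⊤ := ENNReal.ofReal_ne_top
  have hf : Measurable fun y => ENNReal.ofReal |u y - T| :=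
    ENNReal.measurable_ofReal.comp ((hu.sub measurable_const).abs)
  have hA : MeasurableSet {y | ε ≤ ENNReal.ofReal |u y - T|} :=
    measurableSet_le measurable_const hf
  have hbound : ∀ r, μ (S r ∩ P) / μ (S r) ≤
      ε⁻¹ * ((∫⁻ y in S r, ENNReal.ofReal |u y - T| ∂μ) / μ (S r)) := by
    intro r
    have h1 : μ (S r ∩ P) ≤ (μ.restrict (S r)) {y | ε ≤ ENNReal.ofReal |u y - T|} := by
      rw [Measure.restrict_apply hA]
      refine measure_mono fun y hy => ⟨?_, hy.1⟩
      exact (ENNReal.ofReal_le_ofReal_iff (abs_nonneg _)).2 (hP y hy.2)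
    have h3 : ε * (μ.restrict (S r)) {y | ε ≤ ENNReal.ofReal |u y - T|} ≤
        ∫⁻ y in S r, ENNReal.ofReal |u y - T| ∂μ :=
      mul_meas_ge_le_lintegral₀ hf.aemeasurable ε
    have h4 : μ (S r ∩ P) ≤ ε⁻¹ * ∫⁻ y in S r, ENNReal.ofReal |u y - T| ∂μ := by
      calc μ (S r ∩ P) ≤ (μ.restrict (S r)) {y | ε ≤ ENNReal.ofReal |u y - T|} := h1
        _ = ε⁻¹ * (ε * (μ.restrict (S r)) {y | ε ≤ ENNReal.ofReal |u y - T|}) := by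
            rw [← mul_assoc, ENNReal.inv_mul_cancel hε0 hεtop, one_mul]
        _ ≤ ε⁻¹ * ∫⁻ y in S r, ENNReal.ofReal |u y - T| ∂μ :=
            by gcongr
    calc μ (S r ∩ P) / μ (S r) ≤
        (ε⁻¹ * ∫⁻ y in S r, ENNReal.ofReal |u y - T| ∂μ) / μ (S r) :=
          ENNReal.div_le_div h4 le_rfl
      _ = ε⁻¹ * ((∫⁻ y in S r, ENNReal.ofReal |u y - T| ∂μ) / μ (S r)) := by
          rw [mul_div_assoc]
  have hg : Tendsto (fun r => ε⁻¹ *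
      ((∫⁻ y in S r, ENNReal.ofReal |u y - T| ∂μ) / μ (S r))) l (nhds 0) := by
    have := ENNReal.Tendsto.const_mul (a := ε⁻¹) hT (Or.inr (ENNReal.inv_ne_top.2 hε0))
    simpa using this
  exact tendsto_of_tendsto_of_tendsto_of_le_of_le tendsto_const_nhds hg
    (fun r => zero_le) hbound

/-- If the part of `S r` inside `Q` is relatively small in `S r`, and the part of `B r`
outside `Q` is relatively small in `B r`, with `S r ⊆ B r`, then `S r` is relatively small
in `B r`. -/
lemma split0 {X : Type*} [MeasurableSpace X] (μ : Measure X) (l : Filter ℝ)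
    (S B : ℝ → Set X) (hSB : ∀ r, S r ⊆ B r) (Q : Set X) (hQ : MeasurableSet Q)
    (h1 : Tendsto (fun r => μ (S r ∩ Q) / μ (S r)) l (nhds 0))
    (h2 : Tendsto (fun r => μ (B r ∩ Qᶜ) / μ (B r)) l (nhds 0)) :
    Tendsto (fun r => μ (S r) / μ (B r)) l (nhds 0) := by
  have hbound : ∀ r, μ (S r) / μ (B r) ≤
      μ (S r ∩ Q) / μ (S r) + μ (B r ∩ Qᶜ) / μ (B r) := by
    intro r
    have hsplit : μ (S r ∩ Q) + μ (S r \ Q) = μ (S r) :=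
      measure_inter_add_diff (S r) hQ
    calc μ (S r) / μ (B r) = (μ (S r ∩ Q) + μ (S r \ Q)) / μ (B r) := by rw [hsplit]
      _ = μ (S r ∩ Q) / μ (B r) + μ (S r \ Q) / μ (B r) := (ENNReal.div_add_div_same).symm
      _ ≤ μ (S r ∩ Q) / μ (S r) + μ (B r ∩ Qᶜ) / μ (B r) :=
          add_le_add (ENNReal.div_le_div le_rfl (measure_mono (hSB r)))
            (ENNReal.div_le_div (measure_mono fun y hy => ⟨hSB r hy.1, hy.2⟩) le_rfl)
  have hg : Tendsto (fun r => μ (S r ∩ Q) / μ (S r) + μ (B r ∩ Qᶜ) / μ (B r)) l (nhds 0) := by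
    simpa using h1.add h2
  exact tendsto_of_tendsto_of_tendsto_of_le_of_le tendsto_const_nhds hg
    (fun r => zero_le) hbound

/-- If `B r ⊆ S₁ r ∪ S₂ r` and `P` is relatively small in each `Sᵢ r`, then `P` is
relatively small in `B r`. -/
lemma memlem {X : Type*} [MeasurableSpace X] (μ : Measure X) (l : Filter ℝ)
    (S1 S2 B : ℝ → Set X) (h1B : ∀ r, S1 r ⊆ B r) (h2B : ∀ r, S2 r ⊆ B r)
    (hcover : ∀ r, B r ⊆ S1 r ∪ S2 r) (P : Set X)
    (g1 : Tendsto (fun r => μ (S1 r ∩ P) / μ (S1 r)) l (nhds 0))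
    (g2 : Tendsto (fun r => μ (S2 r ∩ P) / μ (S2 r)) l (nhds 0)) :
    Tendsto (fun r => μ (B r ∩ P) / μ (B r)) l (nhds 0) := by
  have hbound : ∀ r, μ (B r ∩ P) / μ (B r) ≤
      μ (S1 r ∩ P) / μ (S1 r) + μ (S2 r ∩ P) / μ (S2 r) := by
    intro r
    have h1 : μ (B r ∩ P) ≤ μ (S1 r ∩ P) + μ (S2 r ∩ P) := by
      refine le_trans (measure_mono ?_) (measure_union_le _ _)
      rintro y ⟨hyB, hyP⟩
      rcases hcover r hyB with h | h
      · exact Or.inl ⟨h, hyP⟩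
      · exact Or.inr ⟨h, hyP⟩
    calc μ (B r ∩ P) / μ (B r) ≤ (μ (S1 r ∩ P) + μ (S2 r ∩ P)) / μ (B r) :=
          ENNReal.div_le_div h1 le_rfl
      _ = μ (S1 r ∩ P) / μ (B r) + μ (S2 r ∩ P) / μ (B r) := (ENNReal.div_add_div_same).symm
      _ ≤ μ (S1 r ∩ P) / μ (S1 r) + μ (S2 r ∩ P) / μ (S2 r) :=
          add_le_add (ENNReal.div_le_div le_rfl (measure_mono (h1B r)))
            (ENNReal.div_le_div le_rfl (measure_mono (h2B r)))
  have hg : Tendsto (fun r => μ (S1 r ∩ P) / μ (S1 r) + μ (S2 r ∩ P) / μ (S2 r)) l (nhds 0) := by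
    simpa using g1.add g2
  exact tendsto_of_tendsto_of_tendsto_of_le_of_le tendsto_const_nhds hg
    (fun r => zero_le) hbound

/-- At a point `x` where both `Ω` and its complement have positive lower density, if the
approximate limits `u^∧(x), u^∨(x)` exist and are finite and both one-sided traces `T₊u(x)`
(from `Ω`) and `T₋u(x)` (from `X∖Ω`) exist, then `{u^∧(x), u^∨(x)} = {T₋u(x), T₊u(x)}`. -/
theorem stmt16 {X : Type*} [PseudoMetricSpace X] [MeasurableSpace X]
    (μ : Measure X) (Ω : Set X) (hΩ : MeasurableSet Ω)
    (u : X → ℝ) (hu : Measurable u) (x : X)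
    (hball : ∀ r : ℝ, 0 < r → 0 < μ (Metric.ball x r) ∧ μ (Metric.ball x r) < ⊤)
    -- positive lower density of `Ω` and of its complement at `x`
    (hdΩ : 0 < Filter.liminf
      (fun r : ℝ => μ (Metric.ball x r ∩ Ω) / μ (Metric.ball x r)) (nhdsWithin 0 (Set.Ioi 0)))
    (hdΩc : 0 < Filter.liminf
      (fun r : ℝ => μ (Metric.ball x r \ Ω) / μ (Metric.ball x r)) (nhdsWithin 0 (Set.Ioi 0)))
    -- `u^∧(x)` and `u^∨(x)` exist and are finite
    (h1ne : (lowerLevelSet μ u x).Nonempty) (h1bd : BddAbove (lowerLevelSet μ u x))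
    (h2ne : (upperLevelSet μ u x).Nonempty) (h2bd : BddBelow (upperLevelSet μ u x))
    -- the interior trace `T₊u(x)` and exterior trace `T₋u(x)` exist
    (Tp Tm : ℝ)
    (hTp : Filter.Tendsto
      (fun r : ℝ => (∫⁻ y in Metric.ball x r ∩ Ω, ENNReal.ofReal |u y - Tp| ∂μ) /
        μ (Metric.ball x r ∩ Ω)) (nhdsWithin 0 (Set.Ioi 0)) (nhds 0))
    (hTm : Filter.Tendsto
      (fun r : ℝ => (∫⁻ y in Metric.ball x r \ Ω, ENNReal.ofReal |u y - Tm| ∂μ) /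
        μ (Metric.ball x r \ Ω)) (nhdsWithin 0 (Set.Ioi 0)) (nhds 0)) :
    ({sSup (lowerLevelSet μ u x), sInf (upperLevelSet μ u x)} : Set ℝ) = {Tm, Tp} := by
  set l := nhdsWithin (0 : ℝ) (Set.Ioi 0) with hl
  set S1 : ℝ → Set X := fun r => Metric.ball x r ∩ Ω with hS1
  set S2 : ℝ → Set X := fun r => Metric.ball x r \ Ω with hS2
  set B : ℝ → Set X := fun r => Metric.ball x r with hB
  have h1B : ∀ r, S1 r ⊆ B r := fun r => Set.inter_subset_left
  have h2B : ∀ r, S2 r ⊆ B r := fun r => Set.diff_subset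
  have hcover : ∀ r, B r ⊆ S1 r ∪ S2 r := by
    intro r y hy
    by_cases h : y ∈ Ω
    · exact Or.inl ⟨hy, h⟩
    · exact Or.inr ⟨hy, h⟩
  -- Membership criteria: levels strictly above both traces are in the upper level set
  have up_mem : ∀ t : ℝ, Tp < t → Tm < t → t ∈ upperLevelSet μ u x := by
    intro t htp htm
    have g1 : Tendsto (fun r => μ (S1 r ∩ {y | t < u y}) / μ (S1 r)) l (nhds 0) :=
      keyP μ hu l S1 Tp (t - Tp) (by linarith) _
        (by intro y hy; simp only [Set.mem_setOf_eq] at hy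
            have := le_abs_self (u y - Tp); linarith) hTp
    have g2 : Tendsto (fun r => μ (S2 r ∩ {y | t < u y}) / μ (S2 r)) l (nhds 0) :=
      keyP μ hu l S2 Tm (t - Tm) (by linarith) _
        (by intro y hy; simp only [Set.mem_setOf_eq] at hy
            have := le_abs_self (u y - Tm); linarith) hTm
    exact memlem μ l S1 S2 B h1B h2B hcover _ g1 g2
  have lo_mem : ∀ t : ℝ, t < Tp → t < Tm → t ∈ lowerLevelSet μ u x := by
    intro t htp htm
    have g1 : Tendsto (fun r => μ (S1 r ∩ {y | u y < t}) / μ (S1 r)) l (nhds 0) :=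
      keyP μ hu l S1 Tp (Tp - t) (by linarith) _
        (by intro y hy; simp only [Set.mem_setOf_eq] at hy
            have := neg_abs_le (u y - Tp); linarith) hTp
    have g2 : Tendsto (fun r => μ (S2 r ∩ {y | u y < t}) / μ (S2 r)) l (nhds 0) :=
      keyP μ hu l S2 Tm (Tm - t) (by linarith) _
        (by intro y hy; simp only [Set.mem_setOf_eq] at hy
            have := neg_abs_le (u y - Tm); linarith) hTm
    exact memlem μ l S1 S2 B h1B h2B hcover _ g1 g2
  -- Every element of the upper level set is ≥ Tp (using positive density of Ω)
  have up_geP : ∀ t ∈ upperLevelSet μ u x, Tp ≤ t := by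
    intro t ht
    by_contra h
    push_neg at h
    have hQ : MeasurableSet {y | u y ≤ t} := measurableSet_le hu measurable_const
    have hQc : {y : X | u y ≤ t}ᶜ = {y | t < u y} := by ext y; simp [not_le]
    have h1 : Tendsto (fun r => μ (S1 r ∩ {y | u y ≤ t}) / μ (S1 r)) l (nhds 0) :=
      keyP μ hu l S1 Tp (Tp - t) (by linarith) _
        (by intro y hy; simp only [Set.mem_setOf_eq] at hy
            have := neg_abs_le (u y - Tp); linarith) hTp
    have h2 : Tendsto (fun r => μ (B r ∩ {y : X | u y ≤ t}ᶜ) / μ (B r)) l (nhds 0) := by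
      rw [hQc]; exact ht
    have hz : Tendsto (fun r => μ (S1 r) / μ (B r)) l (nhds 0) :=
      split0 μ l S1 B h1B _ hQ h1 h2
    rw [hz.liminf_eq] at hdΩ
    exact lt_irrefl _ hdΩ
  have up_geM : ∀ t ∈ upperLevelSet μ u x, Tm ≤ t := by
    intro t ht
    by_contra h
    push_neg at h
    have hQ : MeasurableSet {y | u y ≤ t} := measurableSet_le hu measurable_const
    have hQc : {y : X | u y ≤ t}ᶜ = {y | t < u y} := by ext y; simp [not_le]
    have h1 : Tendsto (fun r => μ (S2 r ∩ {y | u y ≤ t}) / μ (S2 r)) l (nhds 0) :=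
      keyP μ hu l S2 Tm (Tm - t) (by linarith) _
        (by intro y hy; simp only [Set.mem_setOf_eq] at hy
            have := neg_abs_le (u y - Tm); linarith) hTm
    have h2 : Tendsto (fun r => μ (B r ∩ {y : X | u y ≤ t}ᶜ) / μ (B r)) l (nhds 0) := by
      rw [hQc]; exact ht
    have hz : Tendsto (fun r => μ (S2 r) / μ (B r)) l (nhds 0) :=
      split0 μ l S2 B h2B _ hQ h1 h2
    rw [hz.liminf_eq] at hdΩc
    exact lt_irrefl _ hdΩc
  have lo_leP : ∀ t ∈ lowerLevelSet μ u x, t ≤ Tp := by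
    intro t ht
    by_contra h
    push_neg at h
    have hQ : MeasurableSet {y | t ≤ u y} := measurableSet_le measurable_const hu
    have hQc : {y : X | t ≤ u y}ᶜ = {y | u y < t} := by ext y; simp [not_le]
    have h1 : Tendsto (fun r => μ (S1 r ∩ {y | t ≤ u y}) / μ (S1 r)) l (nhds 0) :=
      keyP μ hu l S1 Tp (t - Tp) (by linarith) _
        (by intro y hy; simp only [Set.mem_setOf_eq] at hy
            have := le_abs_self (u y - Tp); linarith) hTp
    have h2 : Tendsto (fun r => μ (B r ∩ {y : X | t ≤ u y}ᶜ) / μ (B r)) l (nhds 0) := by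
      rw [hQc]; exact ht
    have hz : Tendsto (fun r => μ (S1 r) / μ (B r)) l (nhds 0) :=
      split0 μ l S1 B h1B _ hQ h1 h2
    rw [hz.liminf_eq] at hdΩ
    exact lt_irrefl _ hdΩ
  have lo_leM : ∀ t ∈ lowerLevelSet μ u x, t ≤ Tm := by
    intro t ht
    by_contra h
    push_neg at h
    have hQ : MeasurableSet {y | t ≤ u y} := measurableSet_le measurable_const hu
    have hQc : {y : X | t ≤ u y}ᶜ = {y | u y < t} := by ext y; simp [not_le]
    have h1 : Tendsto (fun r => μ (S2 r ∩ {y | t ≤ u y}) / μ (S2 r)) l (nhds 0) :=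
      keyP μ hu l S2 Tm (t - Tm) (by linarith) _
        (by intro y hy; simp only [Set.mem_setOf_eq] at hy
            have := le_abs_self (u y - Tm); linarith) hTm
    have h2 : Tendsto (fun r => μ (B r ∩ {y : X | t ≤ u y}ᶜ) / μ (B r)) l (nhds 0) := by
      rw [hQc]; exact ht
    have hz : Tendsto (fun r => μ (S2 r) / μ (B r)) l (nhds 0) :=
      split0 μ l S2 B h2B _ hQ h1 h2
    rw [hz.liminf_eq] at hdΩc
    exact lt_irrefl _ hdΩc
  -- Identify the sup and inf
  have hup : sInf (upperLevelSet μ u x) = max Tm Tp := by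
    refine le_antisymm ?_ (le_csInf h2ne fun t ht => max_le (up_geM t ht) (up_geP t ht))
    refine le_of_forall_pos_le_add fun ε hε => ?_
    exact csInf_le h2bd (up_mem (max Tm Tp + ε)
      (lt_of_le_of_lt (le_max_right _ _) (lt_add_of_pos_right _ hε))
      (lt_of_le_of_lt (le_max_left _ _) (lt_add_of_pos_right _ hε)))
  have hlo : sSup (lowerLevelSet μ u x) = min Tm Tp := by
    refine le_antisymm (csSup_le h1ne fun t ht => le_min (lo_leM t ht) (lo_leP t ht)) ?_
    refine le_of_forall_pos_le_add fun ε hε => ?_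
    have : min Tm Tp - ε ≤ sSup (lowerLevelSet μ u x) :=
      le_csSup h1bd (lo_mem (min Tm Tp - ε)
        (by have := min_le_right Tm Tp; linarith)
        (by have := min_le_left Tm Tp; linarith))
    linarith
  rw [hlo, hup]
  rcases le_total Tm Tp with h | h
  · rw [min_eq_left h, max_eq_right h]
  · rw [min_eq_right h, max_eq_left h, Set.pair_comm]
end
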